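/- Under uniform diagonal dominance, the shrinking ambiguity sets collapse to the singleton {P}: if ε_N → 0 and P̂'_N → P' = O⋆P in total variation, then any sequence Q_N with d_TV(O⋆Q_N, P̂'_N) ≤ ε_N satisfies d_TV(Q_N, P) → 0. -/

import Mathlib

open Finset

/-- shrinking ambiguity sets collapse to the singleton {P}. -/
theorem stmt14 {Ξ : Type*} [Fintype Ξ] [DecidableEq Ξ] [Nonempty Ξ]
    (O : Ξ → Ξ → ℝ)  -- `O ξ' ξ` denotes O(ξ'|ξ)
    (hO_nonneg : ∀ ξ' ξ, 0 ≤ O ξ' ξ)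
    (hO_sum : ∀ ξ, ∑ ξ', O ξ' ξ = 1)
    (hdd : ∀ ξ ξ₁ ξ₂, ξ₁ ≠ ξ₂ → (Fintype.card Ξ : ℝ) * O ξ₂ ξ₁ < O ξ ξ)
    (P : Ξ → ℝ) (hP_nonneg : ∀ ξ, 0 ≤ P ξ) (hP_sum : ∑ ξ, P ξ = 1)
    (ε : ℕ → ℝ) (hε0 : Filter.Tendsto ε Filter.atTop (nhds 0))
    (Phat : ℕ → Ξ → ℝ)
    -- P̂'_N → P' = O⋆P in total variation
    (hPhat : Filter.Tendsto
      (fun N => (1/2) * ∑ ξ', |Phat N ξ' - ∑ ξ, O ξ' ξ * P ξ|)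
      Filter.atTop (nhds 0))
    (Q : ℕ → Ξ → ℝ)
    (hQ_nonneg : ∀ N ξ, 0 ≤ Q N ξ) (hQ_sum : ∀ N, ∑ ξ, Q N ξ = 1)
    (hQ_ball : ∀ N, (1/2) * ∑ ξ', |(∑ ξ, O ξ' ξ * Q N ξ) - Phat N ξ'| ≤ ε N) :
    Filter.Tendsto (fun N => (1/2) * ∑ ξ, |Q N ξ - P ξ|) Filter.atTop (nhds 0) := by
  classical
  set n : ℕ := Fintype.card Ξ with hn
  have hn1 : 1 ≤ n := Fintype.card_pos
  have hnR : (0:ℝ) < (n:ℝ) := by exact_mod_cast hn1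
  have hc : (0:ℝ) < 2*(n:ℝ) - 1 := by
    have : (1:ℝ) ≤ (n:ℝ) := by exact_mod_cast hn1
    linarith
  -- diagonal lower bound
  have hdiag : ∀ ξ, (n:ℝ) / (2*(n:ℝ) - 1) ≤ O ξ ξ := by
    intro ξ
    have hsum0 : ∑ ξ' ∈ univ.erase ξ, O ξ' ξ + O ξ ξ = ∑ ξ', O ξ' ξ :=
      Finset.sum_erase_add univ (fun ξ' => O ξ' ξ) (mem_univ ξ)
    have hsum : ∑ ξ' ∈ univ.erase ξ, O ξ' ξ = 1 - O ξ ξ := by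
      have h2 := hO_sum ξ
      linarith [hsum0, h2]
    have hcard : (((univ.erase ξ).card : ℕ) : ℝ) = (n:ℝ) - 1 := by
      rw [Finset.card_erase_of_mem (mem_univ ξ), Finset.card_univ, ← hn,
        Nat.cast_sub hn1, Nat.cast_one]
    have hbound : 1 - O ξ ξ ≤ ((n:ℝ) - 1) * (O ξ ξ / n) := by
      rw [← hsum]
      calc ∑ ξ' ∈ univ.erase ξ, O ξ' ξ ≤ ∑ _ξ' ∈ univ.erase ξ, (O ξ ξ / n) := by
            apply Finset.sum_le_sum
            intro ξ' hξ'
            have hne : ξ ≠ ξ' := (Finset.ne_of_mem_erase hξ').symm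
            have := hdd ξ ξ ξ' hne
            rw [le_div_iff₀ hnR]
            nlinarith
        _ = ((n:ℝ) - 1) * (O ξ ξ / n) := by
            rw [Finset.sum_const, nsmul_eq_mul, hcard]
    rw [div_le_iff₀ hc]
    have hOξ : 0 ≤ O ξ ξ := hO_nonneg ξ ξ
    have hid : (n:ℝ) * (((n:ℝ) - 1) * (O ξ ξ / n)) = ((n:ℝ) - 1) * O ξ ξ := by
      field_simp
    have hmul := mul_le_mul_of_nonneg_left hbound (le_of_lt hnR)
    rw [hid] at hmul
    nlinarith
  -- contraction: ∑|f| ≤ (2n-1) * ∑ |O⋆f|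
  have key : ∀ f : Ξ → ℝ,
      ∑ ξ, |f ξ| ≤ (2*(n:ℝ) - 1) * ∑ ξ', |∑ ξ, O ξ' ξ * f ξ| := by
    intro f
    have step1 : ∀ ξ' : Ξ, O ξ' ξ' * |f ξ'| - ∑ ξ ∈ univ.erase ξ', O ξ' ξ * |f ξ|
        ≤ |∑ ξ, O ξ' ξ * f ξ| := by
      intro ξ'
      have hsplit0 : ∑ ξ ∈ univ.erase ξ', O ξ' ξ * f ξ + O ξ' ξ' * f ξ'
          = ∑ ξ, O ξ' ξ * f ξ :=
        Finset.sum_erase_add univ (fun ξ => O ξ' ξ * f ξ) (mem_univ ξ')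
      have hsplit : ∑ ξ, O ξ' ξ * f ξ
          = O ξ' ξ' * f ξ' + ∑ ξ ∈ univ.erase ξ', O ξ' ξ * f ξ := by
        linarith
      have h1 : |O ξ' ξ' * f ξ'| - |∑ ξ ∈ univ.erase ξ', O ξ' ξ * f ξ|
          ≤ |∑ ξ, O ξ' ξ * f ξ| := by
        rw [hsplit]
        have := abs_add_le (O ξ' ξ' * f ξ' + ∑ ξ ∈ univ.erase ξ', O ξ' ξ * f ξ)
          (-(∑ ξ ∈ univ.erase ξ', O ξ' ξ * f ξ))
        simp only [add_neg_cancel_right, abs_neg] at this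
        linarith
      have h2 : |∑ ξ ∈ univ.erase ξ', O ξ' ξ * f ξ| ≤ ∑ ξ ∈ univ.erase ξ', O ξ' ξ * |f ξ| := by
        refine (Finset.abs_sum_le_sum_abs _ _).trans ?_
        apply Finset.sum_le_sum
        intro ξ _
        rw [abs_mul, abs_of_nonneg (hO_nonneg ξ' ξ)]
      have h3 : |O ξ' ξ' * f ξ'| = O ξ' ξ' * |f ξ'| := by
        rw [abs_mul, abs_of_nonneg (hO_nonneg ξ' ξ')]
      linarith
    have step2 : ∑ ξ', (O ξ' ξ' * |f ξ'|) - ∑ ξ', ∑ ξ ∈ univ.erase ξ', O ξ' ξ * |f ξ|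
        ≤ ∑ ξ', |∑ ξ, O ξ' ξ * f ξ| := by
      rw [← Finset.sum_sub_distrib]
      exact Finset.sum_le_sum fun ξ' _ => step1 ξ'
    have hswap : ∑ ξ', ∑ ξ ∈ univ.erase ξ', O ξ' ξ * |f ξ|
        = (∑ ξ, |f ξ|) - ∑ ξ, O ξ ξ * |f ξ| := by
      have h1 : ∀ ξ' : Ξ, ∑ ξ ∈ univ.erase ξ', O ξ' ξ * |f ξ|
          = (∑ ξ, O ξ' ξ * |f ξ|) - O ξ' ξ' * |f ξ'| := by
        intro ξ'
        have h0 : ∑ ξ ∈ univ.erase ξ', O ξ' ξ * |f ξ| + O ξ' ξ' * |f ξ'|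
            = ∑ ξ, O ξ' ξ * |f ξ| :=
          Finset.sum_erase_add univ (fun ξ => O ξ' ξ * |f ξ|) (mem_univ ξ')
        linarith
      rw [Finset.sum_congr rfl fun ξ' _ => h1 ξ', Finset.sum_sub_distrib]
      congr 1
      rw [Finset.sum_comm]
      apply Finset.sum_congr rfl
      intro ξ _
      rw [← Finset.sum_mul, hO_sum ξ, one_mul]
    have hD : ((n:ℝ) / (2*(n:ℝ) - 1)) * ∑ ξ, |f ξ| ≤ ∑ ξ, O ξ ξ * |f ξ| := by
      rw [Finset.mul_sum]
      exact Finset.sum_le_sum fun ξ _ =>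
        mul_le_mul_of_nonneg_right (hdiag ξ) (abs_nonneg _)
    have hT : (0:ℝ) ≤ ∑ ξ, |f ξ| := Finset.sum_nonneg fun ξ _ => abs_nonneg _
    have hmain : 2 * (∑ ξ, O ξ ξ * |f ξ|) - ∑ ξ, |f ξ| ≤ ∑ ξ', |∑ ξ, O ξ' ξ * f ξ| := by
      rw [hswap] at step2; linarith
    have hD' : (n:ℝ) * ∑ ξ, |f ξ| ≤ (2*(n:ℝ) - 1) * ∑ ξ, O ξ ξ * |f ξ| := by
      have := mul_le_mul_of_nonneg_left hD (le_of_lt hc)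
      calc (n:ℝ) * ∑ ξ, |f ξ|
          = (2*(n:ℝ) - 1) * (((n:ℝ) / (2*(n:ℝ) - 1)) * ∑ ξ, |f ξ|) := by
            rw [← mul_assoc, mul_div_assoc', mul_div_cancel_left₀ _ hc.ne']
        _ ≤ (2*(n:ℝ) - 1) * ∑ ξ, O ξ ξ * |f ξ| := this
    have e1 := mul_le_mul_of_nonneg_left hmain (le_of_lt hc)
    nlinarith [e1, hD']
  -- define the limit comparison function
  set h : ℕ → ℝ := fun N => (1/2) * ∑ ξ', |Phat N ξ' - ∑ ξ, O ξ' ξ * P ξ| with hh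
  have hbound : ∀ N, (1/2) * ∑ ξ, |Q N ξ - P ξ| ≤ (2*(n:ℝ) - 1) * (ε N + h N) := by
    intro N
    have hlin : ∀ ξ' : Ξ, ∑ ξ, O ξ' ξ * (Q N ξ - P ξ)
        = (∑ ξ, O ξ' ξ * Q N ξ) - ∑ ξ, O ξ' ξ * P ξ := by
      intro ξ'
      rw [← Finset.sum_sub_distrib]
      exact Finset.sum_congr rfl fun ξ _ => by ring
    have htri : ∑ ξ', |∑ ξ, O ξ' ξ * (Q N ξ - P ξ)|
        ≤ (∑ ξ', |(∑ ξ, O ξ' ξ * Q N ξ) - Phat N ξ'|)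
          + ∑ ξ', |Phat N ξ' - ∑ ξ, O ξ' ξ * P ξ| := by
      rw [← Finset.sum_add_distrib]
      apply Finset.sum_le_sum
      intro ξ' _
      rw [hlin ξ']
      exact abs_sub_le _ _ _
    have hk := key (fun ξ => Q N ξ - P ξ)
    have hball := hQ_ball N
    calc (1/2) * ∑ ξ, |Q N ξ - P ξ|
        ≤ (1/2) * ((2*(n:ℝ) - 1) * ∑ ξ', |∑ ξ, O ξ' ξ * (Q N ξ - P ξ)|) := by
          apply mul_le_mul_of_nonneg_left _ (by norm_num)
          exact hk
      _ ≤ (1/2) * ((2*(n:ℝ) - 1) * ((∑ ξ', |(∑ ξ, O ξ' ξ * Q N ξ) - Phat N ξ'|)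
            + ∑ ξ', |Phat N ξ' - ∑ ξ, O ξ' ξ * P ξ|)) := by
          apply mul_le_mul_of_nonneg_left _ (by norm_num)
          exact mul_le_mul_of_nonneg_left htri (le_of_lt hc)
      _ = (2*(n:ℝ) - 1) * ((1/2) * ∑ ξ', |(∑ ξ, O ξ' ξ * Q N ξ) - Phat N ξ'| + h N) := by
          rw [hh]; ring
      _ ≤ (2*(n:ℝ) - 1) * (ε N + h N) := by
          apply mul_le_mul_of_nonneg_left _ (le_of_lt hc)
          linarith
  have hlim : Filter.Tendsto (fun N => (2*(n:ℝ) - 1) * (ε N + h N))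
      Filter.atTop (nhds 0) := by
    have := ((hε0.add hPhat).const_mul (2*(n:ℝ) - 1))
    simpa using this
  apply squeeze_zero
  · intro N
    exact mul_nonneg (by norm_num) (Finset.sum_nonneg fun ξ _ => abs_nonneg _)
  · exact hbound
  · exact hlim
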